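/- Let n be a positive integer, Y_1, …, Y_n ∈ ℝ, γ > 0, and let a be a positive integer. Define the empirical characteristic function φ_n(t) = (1/n) Σ_{j=1}^n exp(i t Y_j), the weight w(t) = exp(−γ t²), I_w(x) = √(π/γ) exp(−x²/(4γ)), and the statistic Δ_n(a,γ) = n ∫_ℝ |φ_n(t)^a − φ_n(t a)|² w(t) dt. Then Δ_n(a,γ) = n^{−(2a−1)} Σ_{j_1,…,j_{2a}=1}^n I_w( Y_{j_1} + ⋯ + Y_{j_a} − Y_{j_{a+1}} − ⋯ − Y_{j_{2a}} ) + n^{−1} Σ_{j_1,j_2=1}^n I_w( a(Y_{j_1} − Y_{j_2}) ) − 2 n^{−a} Σ_{j_1,…,j_{a+1}=1}^n I_w( Y_{j_1} + ⋯ + Y_{j_a} − a Y_{j_{a+1}} ). -/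

import Mathlib

open Real Complex Finset MeasureTheory

noncomputable def EE (x t : ℝ) : ℂ := Complex.exp (Complex.I * x * t)

lemma EE_mul (x y t : ℝ) : EE x t * EE y t = EE (x + y) t := by
  rw [EE, EE, EE, ← Complex.exp_add]
  congr 1
  push_cast
  ring

lemma EE_conj (x t : ℝ) : (starRingEnd ℂ) (EE x t) = EE (-x) t := by
  rw [EE, EE, ← Complex.exp_conj]
  congr 1
  simp [Complex.conj_ofReal]

lemma sum_mul_sum_EE {α β : Type*} [Fintype α] [Fintype β] (f : α → ℝ) (g : β → ℝ) (t : ℝ) :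
    (∑ j : α, EE (f j) t) * (∑ k : β, EE (-(g k)) t) = ∑ j : α, ∑ k : β, EE (f j - g k) t := by
  rw [Finset.sum_mul_sum]
  refine Finset.sum_congr rfl fun j _ => Finset.sum_congr rfl fun k _ => ?_
  rw [EE_mul, ← sub_eq_add_neg]

lemma EE_integrable (γ : ℝ) (hγ : 0 < γ) (x : ℝ) :
    Integrable (fun t : ℝ => EE x t * Complex.exp (-(γ : ℂ) * t ^ 2)) := by
  have h := integrable_cexp_quadratic (b := (γ : ℂ)) (by simpa using hγ) (Complex.I * x) 0
  refine h.congr (Filter.Eventually.of_forall fun t => ?_)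
  simp only [EE, ← Complex.exp_add]
  congr 1
  ring

lemma EE_integral (γ : ℝ) (hγ : 0 < γ) (x : ℝ) :
    ∫ t : ℝ, EE x t * Complex.exp (-(γ : ℂ) * t ^ 2)
      = ((Real.sqrt (π / γ) * Real.exp (-x ^ 2 / (4 * γ)) : ℝ) : ℂ) := by
  have h := fourierIntegral_gaussian (b := (γ : ℂ)) (by simpa using hγ) (x : ℂ)
  simp only [EE]
  rw [h, show ((π:ℂ)/(γ:ℂ)) = ((π/γ : ℝ):ℂ) by push_cast; ring,
    show (-(x:ℂ)^2/(4*(γ:ℂ))) = ((-x^2/(4*γ) : ℝ):ℂ) by push_cast; ring,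
    show ((1:ℂ)/2) = (((1/2 : ℝ)):ℂ) by norm_num,
    ← Complex.ofReal_cpow (by positivity), ← Complex.ofReal_exp, ← Complex.ofReal_mul,
    Real.sqrt_eq_rpow]

lemma sum_integrable {α β : Type*} [Fintype α] [Fintype β] (γ : ℝ) (hγ : 0 < γ)
    (f : α → β → ℝ) :
    Integrable (fun t : ℝ => ∑ j : α, ∑ k : β, EE (f j k) t * Complex.exp (-(γ : ℂ) * t ^ 2)) :=
  integrable_finset_sum _ fun j _ => integrable_finset_sum _ fun k _ => EE_integrable γ hγ _

lemma sum_int {α β : Type*} [Fintype α] [Fintype β] (γ : ℝ) (hγ : 0 < γ) (f : α → β → ℝ) :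
    ∫ t : ℝ, ∑ j : α, ∑ k : β, EE (f j k) t * Complex.exp (-(γ : ℂ) * t ^ 2)
      = ((∑ j : α, ∑ k : β, Real.sqrt (π / γ) * Real.exp (-(f j k) ^ 2 / (4 * γ)) : ℝ) : ℂ) := by
  rw [integral_finset_sum _ fun j _ => integrable_finset_sum _ fun k _ => EE_integrable γ hγ _,
    Complex.ofReal_sum]
  refine Finset.sum_congr rfl fun j _ => ?_
  rw [integral_finset_sum _ fun k _ => EE_integrable γ hγ _, Complex.ofReal_sum]
  exact Finset.sum_congr rfl fun k _ => EE_integral γ hγ _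

lemma sum_mul_sum_EE' {α β : Type*} [Fintype α] [Fintype β] (f : α → ℝ) (g : β → ℝ)
    (t : ℝ) (c : ℂ) :
    (∑ j : α, EE (f j) t) * (∑ k : β, EE (-(g k)) t) * c
      = ∑ j : α, ∑ k : β, EE (f j - g k) t * c := by
  rw [sum_mul_sum_EE, Finset.sum_mul]
  exact Finset.sum_congr rfl fun j _ => Finset.sum_mul _ _ _

lemma final_arith (n : ℝ) (hn : 0 < n) (a : ℕ) (ha : 0 < a) (X1 X2 X3 : ℝ) :
    n * (((n ^ a)⁻¹) ^ 2 * X1 + (n⁻¹) ^ 2 * X2 - (n ^ a)⁻¹ * n⁻¹ * X3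
        - (n ^ a)⁻¹ * n⁻¹ * X3)
      = (n ^ (2 * a - 1))⁻¹ * X1 + n⁻¹ * X2 - 2 * (n ^ a)⁻¹ * X3 := by
  have hn0 : n ≠ 0 := hn.ne'
  have h1 : ((n ^ a)⁻¹) ^ 2 = (n ^ (2 * a - 1) * n)⁻¹ := by
    have h : (n ^ a) ^ 2 = n ^ (2 * a - 1) * n := by
      rw [← pow_mul, show a * 2 = (2 * a - 1) + 1 by omega, pow_succ]
    rw [inv_pow, h]
  rw [h1]
  have h2 : n ^ (2 * a - 1) ≠ 0 := pow_ne_zero _ hn0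
  have h3 : n ^ a ≠ 0 := pow_ne_zero _ hn0
  field_simp
  ring

theorem test_statistic_computational_formula (n : ℕ) (hn : 0 < n) (Y : Fin n → ℝ)
    (γ : ℝ) (hγ : 0 < γ) (a : ℕ) (ha : 0 < a) :
    let φn : ℝ → ℂ := fun s =>
      (n : ℂ)⁻¹ * ∑ j : Fin n, Complex.exp (Complex.I * s * (Y j))
    let Iw : ℝ → ℝ := fun x => Real.sqrt (π / γ) * Real.exp (-x ^ 2 / (4 * γ))
    (n : ℝ) * ∫ t : ℝ, ‖φn t ^ a - φn (t * a)‖ ^ 2 * Real.exp (-γ * t ^ 2) =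
      ((n : ℝ) ^ (2 * a - 1))⁻¹ *
          ∑ j : Fin a → Fin n, ∑ k : Fin a → Fin n,
            Iw ((∑ i : Fin a, Y (j i)) - ∑ i : Fin a, Y (k i)) +
        (n : ℝ)⁻¹ *
          ∑ j₁ : Fin n, ∑ j₂ : Fin n, Iw ((a : ℝ) * (Y j₁ - Y j₂)) -
        2 * ((n : ℝ) ^ a)⁻¹ *
          ∑ j : Fin a → Fin n, ∑ m : Fin n,
            Iw ((∑ i : Fin a, Y (j i)) - (a : ℝ) * Y m) := by
  intro φn Iw
  set S : (Fin a → Fin n) → ℝ := fun j => ∑ i : Fin a, Y (j i) with hSdef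
  set cN : ℂ := ((n : ℂ) ^ a)⁻¹ with hcN
  set cn : ℂ := (n : ℂ)⁻¹ with hcn
  -- step 1: the power of the e.c.f.
  have hSc : ∀ p : Fin a → Fin n, ((S p : ℝ) : ℂ) = ∑ i : Fin a, ((Y (p i) : ℝ) : ℂ) := by
    intro p; rw [hSdef]; push_cast; rfl
  have h1 : ∀ t : ℝ, φn t ^ a = cN * ∑ j : Fin a → Fin n, EE (S j) t := by
    intro t
    show ((n : ℂ)⁻¹ * ∑ m : Fin n, Complex.exp (Complex.I * t * (Y m))) ^ a = _
    rw [mul_pow, inv_pow]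
    congr 1
    calc (∑ m : Fin n, Complex.exp (Complex.I * t * (Y m))) ^ a
        = ∏ _i : Fin a, ∑ m : Fin n, Complex.exp (Complex.I * t * (Y m)) := by
          rw [Finset.prod_const, Finset.card_univ, Fintype.card_fin]
      _ = ∑ p ∈ Fintype.piFinset (fun _ : Fin a => (Finset.univ : Finset (Fin n))),
            ∏ i : Fin a, Complex.exp (Complex.I * t * (Y (p i))) :=
          Finset.prod_univ_sum _ _
      _ = ∑ p : Fin a → Fin n, EE (S p) t := by
          rw [Fintype.piFinset_univ]
          refine Finset.sum_congr rfl fun p _ => ?_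
          rw [← Complex.exp_sum, EE]
          congr 1
          rw [show (Complex.I * ((S p : ℝ) : ℂ) * (t : ℝ)) =
              (Complex.I * (t : ℝ)) * ((S p : ℝ) : ℂ) by ring, hSc p, Finset.mul_sum]
  have h2 : ∀ t : ℝ, φn (t * (a : ℝ)) = cn * ∑ m : Fin n, EE ((a : ℝ) * Y m) t := by
    intro t
    show (n : ℂ)⁻¹ * ∑ m : Fin n, Complex.exp (Complex.I * ((t * (a : ℝ) : ℝ) : ℂ) * (Y m)) = _
    congr 1
    refine Finset.sum_congr rfl fun m _ => ?_
    rw [EE]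
    congr 1
    push_cast
    ring
  -- the four kernels
  set T1 : ℝ → ℂ := fun t => ∑ j : Fin a → Fin n, ∑ k : Fin a → Fin n,
    EE (S j - S k) t * Complex.exp (-(γ : ℂ) * t ^ 2) with hT1
  set T2 : ℝ → ℂ := fun t => ∑ m : Fin n, ∑ m' : Fin n,
    EE ((a : ℝ) * Y m - (a : ℝ) * Y m') t * Complex.exp (-(γ : ℂ) * t ^ 2) with hT2
  set T3 : ℝ → ℂ := fun t => ∑ j : Fin a → Fin n, ∑ m : Fin n,
    EE (S j - (a : ℝ) * Y m) t * Complex.exp (-(γ : ℂ) * t ^ 2) with hT3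
  set T4 : ℝ → ℂ := fun t => ∑ m : Fin n, ∑ j : Fin a → Fin n,
    EE ((a : ℝ) * Y m - S j) t * Complex.exp (-(γ : ℂ) * t ^ 2) with hT4
  set F : ℝ → ℂ := fun t => cN ^ 2 * T1 t + cn ^ 2 * T2 t - cN * cn * T3 t - cN * cn * T4 t
    with hF
  have hG : ∀ t : ℝ, ((Real.exp (-γ * t ^ 2) : ℝ) : ℂ) = Complex.exp (-(γ : ℂ) * t ^ 2) := by
    intro t
    rw [Complex.ofReal_exp]
    congr 1
    push_cast
    ring
  -- pointwise identity
  have hpt : ∀ t : ℝ,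
      ‖φn t ^ a - φn (t * (a : ℝ))‖ ^ 2 * Real.exp (-γ * t ^ 2) = (F t).re := by
    intro t
    have hzF : (φn t ^ a - φn (t * (a : ℝ))) *
        (starRingEnd ℂ) (φn t ^ a - φn (t * (a : ℝ))) *
        ((Real.exp (-γ * t ^ 2) : ℝ) : ℂ) = F t := by
      have hcNc : (starRingEnd ℂ) cN = cN := by rw [hcN]; simp
      have hcnc : (starRingEnd ℂ) cn = cn := by rw [hcn]; simp
      rw [h1 t, h2 t, hG t]
      simp only [map_sub, map_mul, map_sum, EE_conj, hcNc, hcnc]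
      rw [show ∀ (P P' Q Q' g : ℂ),
          (cN * P - cn * Q) * (cN * P' - cn * Q') * g
            = cN ^ 2 * (P * P' * g) + cn ^ 2 * (Q * Q' * g)
              - cN * cn * (P * Q' * g) - cN * cn * (Q * P' * g) from
          fun P P' Q Q' g => by ring]
      rw [sum_mul_sum_EE', sum_mul_sum_EE', sum_mul_sum_EE', sum_mul_sum_EE']
    calc ‖φn t ^ a - φn (t * (a : ℝ))‖ ^ 2 * Real.exp (-γ * t ^ 2)
        = ((φn t ^ a - φn (t * (a : ℝ))) *
            (starRingEnd ℂ) (φn t ^ a - φn (t * (a : ℝ))) *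
            ((Real.exp (-γ * t ^ 2) : ℝ) : ℂ)).re := by
          rw [Complex.mul_conj, ← Complex.ofReal_mul, Complex.ofReal_re, ← Complex.sq_norm]
      _ = (F t).re := by rw [hzF]
  -- integrability
  have h1i := sum_integrable γ hγ (fun j k : Fin a → Fin n => S j - S k)
  have h2i := sum_integrable γ hγ (fun m m' : Fin n => (a : ℝ) * Y m - (a : ℝ) * Y m')
  have h3i := sum_integrable γ hγ (fun (j : Fin a → Fin n) (m : Fin n) => S j - (a : ℝ) * Y m)
  have h4i := sum_integrable γ hγ (fun (m : Fin n) (j : Fin a → Fin n) => (a : ℝ) * Y m - S j)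
  have h1i' : Integrable T1 := h1i
  have h2i' : Integrable T2 := h2i
  have h3i' : Integrable T3 := h3i
  have h4i' : Integrable T4 := h4i
  have hFint : Integrable F :=
    (((h1i'.const_mul _).add (h2i'.const_mul _)).sub (h3i'.const_mul _)).sub (h4i'.const_mul _)
  -- the real sums
  set X1 : ℝ := ∑ j : Fin a → Fin n, ∑ k : Fin a → Fin n, Iw (S j - S k) with hX1
  set X2 : ℝ := ∑ m : Fin n, ∑ m' : Fin n, Iw ((a : ℝ) * Y m - (a : ℝ) * Y m') with hX2
  set X3 : ℝ := ∑ j : Fin a → Fin n, ∑ m : Fin n, Iw (S j - (a : ℝ) * Y m) with hX3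
  set X4 : ℝ := ∑ m : Fin n, ∑ j : Fin a → Fin n, Iw ((a : ℝ) * Y m - S j) with hX4
  have hI1 : ∫ t : ℝ, T1 t = ((X1 : ℝ) : ℂ) := sum_int γ hγ _
  have hI2 : ∫ t : ℝ, T2 t = ((X2 : ℝ) : ℂ) := sum_int γ hγ _
  have hI3 : ∫ t : ℝ, T3 t = ((X3 : ℝ) : ℂ) := sum_int γ hγ _
  have hI4 : ∫ t : ℝ, T4 t = ((X4 : ℝ) : ℂ) := sum_int γ hγ _
  have hFI : ∫ t : ℝ, F t
      = ((((((n : ℝ) ^ a)⁻¹) ^ 2 * X1 + (((n : ℝ))⁻¹) ^ 2 * X2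
          - ((n : ℝ) ^ a)⁻¹ * (n : ℝ)⁻¹ * X3 - ((n : ℝ) ^ a)⁻¹ * (n : ℝ)⁻¹ * X4 : ℝ)) : ℂ) := by
    calc ∫ t : ℝ, F t
        = cN ^ 2 * (∫ t : ℝ, T1 t) + cn ^ 2 * (∫ t : ℝ, T2 t)
            - cN * cn * (∫ t : ℝ, T3 t) - cN * cn * (∫ t : ℝ, T4 t) := by
          have hA : Integrable (fun t : ℝ => cN ^ 2 * T1 t) := h1i'.const_mul _
          have hB : Integrable (fun t : ℝ => cn ^ 2 * T2 t) := h2i'.const_mul _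
          have hC : Integrable (fun t : ℝ => cN * cn * T3 t) := h3i'.const_mul _
          have hD : Integrable (fun t : ℝ => cN * cn * T4 t) := h4i'.const_mul _
          have hAB : Integrable (fun t : ℝ => cN ^ 2 * T1 t + cn ^ 2 * T2 t) := hA.add hB
          have hABC : Integrable
              (fun t : ℝ => cN ^ 2 * T1 t + cn ^ 2 * T2 t - cN * cn * T3 t) := hAB.sub hC
          simp only [hF]
          rw [MeasureTheory.integral_sub hABC hD, MeasureTheory.integral_sub hAB hC,
            MeasureTheory.integral_add hA hB,
            MeasureTheory.integral_const_mul, MeasureTheory.integral_const_mul,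
            MeasureTheory.integral_const_mul, MeasureTheory.integral_const_mul]
      _ = _ := by
          rw [hI1, hI2, hI3, hI4, hcN, hcn]
          push_cast
          ring
  -- put everything together
  have hmain : ∫ t : ℝ, ‖φn t ^ a - φn (t * (a : ℝ))‖ ^ 2 * Real.exp (-γ * t ^ 2)
      = (((n : ℝ) ^ a)⁻¹) ^ 2 * X1 + (((n : ℝ))⁻¹) ^ 2 * X2
          - ((n : ℝ) ^ a)⁻¹ * (n : ℝ)⁻¹ * X3 - ((n : ℝ) ^ a)⁻¹ * (n : ℝ)⁻¹ * X4 := by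
    rw [show (fun t : ℝ => ‖φn t ^ a - φn (t * (a : ℝ))‖ ^ 2
        * Real.exp (-γ * t ^ 2)) = fun t : ℝ => (F t).re from funext hpt]
    have := integral_re (μ := MeasureTheory.volume) hFint
    simp only [RCLike.re_eq_complex_re] at this
    rw [this, hFI, Complex.ofReal_re]
  rw [hmain]
  -- identify the sums
  have hIw : ∀ x : ℝ, Iw x = Real.sqrt (π / γ) * Real.exp (-x ^ 2 / (4 * γ)) := fun x => rfl
  have hX43 : X4 = X3 := by
    rw [hX4, hX3, Finset.sum_comm]
    refine Finset.sum_congr rfl fun j _ => Finset.sum_congr rfl fun m _ => ?_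
    rw [hIw, hIw, show ((a : ℝ) * Y m - S j) ^ 2 = (S j - (a : ℝ) * Y m) ^ 2 by ring]
  have hX2' : (∑ j₁ : Fin n, ∑ j₂ : Fin n, Iw ((a : ℝ) * (Y j₁ - Y j₂))) = X2 := by
    rw [hX2]
    exact Finset.sum_congr rfl fun j₁ _ => Finset.sum_congr rfl fun j₂ _ => by rw [mul_sub]
  rw [hX2', hX43]
  have hn' : (0 : ℝ) < (n : ℝ) := by exact_mod_cast hn
  exact final_arith (n : ℝ) hn' a ha X1 X2 X3
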